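/- Let R be a ring and let S = Soc(R_R) be its right socle, which is a two-sided ideal of R. If the quotient ring R/S is J-reversible (i.e., for all x, y ∈ R/S, xy = 0 implies yx ∈ J(R/S)), then R is δ-reversible. -/
import Mathlib


/-- A right ideal `I` of `R` (a submodule of `R` as a right `R`-module, i.e. an
`Rᵐᵒᵖ`-submodule) is essential if every right ideal meeting it trivially is trivial. -/
def IsEssentialRightIdeal (R : Type*) [Ring R] (I : Submodule Rᵐᵒᵖ R) : Prop :=
  ∀ K : Submodule Rᵐᵒᵖ R, K ⊓ I = ⊥ → K = ⊥

/-- The Zhou radical `δ(R)`: the intersection of all essential maximal right ideals of `R`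
(the whole ring if there are no essential maximal right ideals). -/
def zhouRadical (R : Type*) [Ring R] : Set R :=
  ⋂₀ { S : Set R | ∃ I : Submodule Rᵐᵒᵖ R, IsCoatom I ∧ IsEssentialRightIdeal R I ∧ S = ↑I }

/-- A ring `R` is `δ`-reversible if `a * b = 0` implies `b * a ∈ δ(R)`. -/
def IsDeltaReversible (R : Type*) [Ring R] : Prop :=
  ∀ a b : R, a * b = 0 → b * a ∈ zhouRadical R

/-- The Jacobson radical `J(S)`: the intersection of all maximal right ideals of `S`. -/
def jacobsonRight (S : Type*) [Ring S] : Set S :=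
  ⋂₀ { T : Set S | ∃ I : Submodule Sᵐᵒᵖ S, IsCoatom I ∧ T = ↑I }

/-- A ring `S` is J-reversible if `x * y = 0` implies `y * x ∈ J(S)`. -/
def IsJReversible (S : Type*) [Ring S] : Prop :=
  ∀ x y : S, x * y = 0 → y * x ∈ jacobsonRight S

/-- The right socle of `R`: the sum of all minimal (simple) right ideals of `R`. -/
def rightSocle (R : Type*) [Ring R] : Submodule Rᵐᵒᵖ R :=
  sSup {I : Submodule Rᵐᵒᵖ R | IsAtom I}

/-- If the quotient of `R` by its right socle (a two-sided ideal) is J-reversible,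
then `R` is δ-reversible. -/
theorem deltaReversible_of_quotient_socle_jReversible (R : Type*) [Ring R]
    (S : TwoSidedIdeal R) (hS : (S : Set R) = (rightSocle R : Set R))
    (h : IsJReversible S.ringCon.Quotient) :
    IsDeltaReversible R := by
  intro a b hab T hT
  obtain ⟨I, hI_co, hI_ess, rfl⟩ := hT
  -- the socle is contained in every essential right ideal
  have hsoc : rightSocle R ≤ I := by
    apply sSup_le
    intro A hA
    rcases lt_or_eq_of_le (inf_le_left : A ⊓ I ≤ A) with hlt | heq
    · exact absurd (hI_ess A (hA.2 _ hlt)) hA.1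
    · exact heq ▸ inf_le_right
  have hSI : ∀ x : R, x ∈ S → x ∈ I := by
    intro x hx
    exact hsoc (by rw [← SetLike.mem_coe, ← hS] at *; exact hx)
  set Q := S.ringCon.Quotient with hQ
  let π : R →+* Q := S.ringCon.mk'
  have hπ : Function.Surjective π := fun x => Quotient.inductionOn x fun r => ⟨r, rfl⟩
  have hker : ∀ x y : R, π x = π y → x - y ∈ S := by
    intro x y hxy
    exact (S.rel_iff x y).1 (S.ringCon.eq.1 hxy)
  -- image of I in the quotient
  let Ibar : Submodule Qᵐᵒᵖ Q :=
    { carrier := π '' I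
      add_mem' := by
        rintro _ _ ⟨x, hx, rfl⟩ ⟨y, hy, rfl⟩
        exact ⟨x + y, I.add_mem hx hy, map_add π x y⟩
      zero_mem' := ⟨0, I.zero_mem, map_zero π⟩
      smul_mem' := by
        rintro q _ ⟨x, hx, rfl⟩
        obtain ⟨r, hr⟩ := hπ q.unop
        refine ⟨MulOpposite.op r • x, I.smul_mem _ hx, ?_⟩
        show π (x * r) = q • π x
        rw [map_mul, hr, MulOpposite.smul_eq_mul_unop] }
  have hmem : ∀ z : Q, z ∈ Ibar ↔ z ∈ π '' I := fun z => Iff.rfl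
  have hIbar_ne : Ibar ≠ ⊤ := by
    intro htop
    have h1 : (1 : Q) ∈ Ibar := htop ▸ Submodule.mem_top
    obtain ⟨i, hi, hie⟩ := h1
    have : (1 : R) - i ∈ S := hker 1 i (by rw [hie, map_one])
    have h1I : (1 : R) ∈ I := by
      have := I.add_mem (hSI _ this) hi
      simpa using this
    exact hI_co.1 (eq_top_iff.2 fun x _ => by
      simpa using I.smul_mem (MulOpposite.op x) h1I)
  have hIbar_co : IsCoatom Ibar := by
    constructor
    · exact hIbar_ne
    · intro K hK
      -- preimage of K in R
      let K' : Submodule Rᵐᵒᵖ R :=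
        { carrier := π ⁻¹' K
          add_mem' := by
            intro x y hx hy
            show π (x + y) ∈ K
            rw [map_add]; exact K.add_mem hx hy
          zero_mem' := by show π 0 ∈ K; rw [map_zero]; exact K.zero_mem
          smul_mem' := by
            intro r x hx
            show π (x * r.unop) ∈ K
            rw [map_mul]
            have := K.smul_mem (MulOpposite.op (π r.unop)) hx
            rwa [MulOpposite.smul_eq_mul_unop] at this }
      have hIK' : I ≤ K' := fun x hx => le_of_lt hK ⟨x, hx, rfl⟩
      have hne : I ≠ K' := by
        intro hEq
        obtain ⟨q, hqK, hqI⟩ := SetLike.exists_of_lt hK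
        obtain ⟨r, rfl⟩ := hπ q
        exact hqI ⟨r, hEq ▸ (hqK : π r ∈ K), rfl⟩
      have hK'top : K' = ⊤ := hI_co.2 K' (lt_of_le_of_ne hIK' hne)
      refine eq_top_iff.2 fun q _ => ?_
      obtain ⟨r, rfl⟩ := hπ q
      have : r ∈ K' := hK'top ▸ Submodule.mem_top
      exact this
  -- apply J-reversibility
  have hJ : π b * π a ∈ jacobsonRight Q := h (π a) (π b) (by rw [← map_mul, hab, map_zero])
  have hmem2 : π (b * a) ∈ Ibar := by
    rw [map_mul]
    exact hJ _ ⟨Ibar, hIbar_co, rfl⟩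
  obtain ⟨i, hi, hie⟩ := hmem2
  have : b * a - i ∈ S := hker _ _ hie.symm
  have : b * a ∈ I := by
    have := I.add_mem (hSI _ this) hi
    simpa using this
  exact this
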